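/- Let U ⊆ ℝⁿ be open and suppose the bounded function u ∈ C(U) satisfies the convexity criterion in U. Then: (i) for every open V ⋐ U, with δ = δ(V) > 0 as in the convexity criterion, the map t ↦ (T^t u(x) − u(x))/t is nondecreasing on (0, δ] for each x ∈ V; (ii) S⁺u(x) = inf_{0 < t < δ(V)} (T^t u(x) − u(x))/t for every x ∈ V; (iii) the map x ↦ S⁺u(x) is upper semicontinuous on U; (iv) u ∈ Lip_loc(U). -/

import Mathlib

open Set Metric MeasureTheory Filter Bornology
open scoped RealInnerProductSpace

noncomputable section

abbrev Euc (n : ℕ) := EuclideanSpace ℝ (Fin n)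

variable {n : ℕ}

/-- The Lagrangian of `H`, an extended real number. -/
def Lag (H : Euc n → ℝ) (q : Euc n) : EReal :=
  ⨆ p : Euc n, ((⟪p, q⟫ - H p : ℝ) : EReal)

/-- `T^t u (x)`, with supremum taken over `y ∈ S`. Points `y` where the Lagrangian term
is `+∞` contribute nothing, since no real number equals `-∞`. -/
def TupOn (H : Euc n → ℝ) (S : Set (Euc n)) (u : Euc n → ℝ) (t : ℝ) (x : Euc n) : ℝ :=
  if t = 0 then u x
  else sSup {r : ℝ | ∃ y ∈ S, (r : EReal) = (u y : EReal) - (t : EReal) * Lag H (t⁻¹ • (y - x))}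

/-- `T_t u (x)`, with infimum taken over `y ∈ S`. -/
def TdnOn (H : Euc n → ℝ) (S : Set (Euc n)) (u : Euc n → ℝ) (t : ℝ) (x : Euc n) : ℝ :=
  if t = 0 then u x
  else sInf {r : ℝ | ∃ y ∈ S, (r : EReal) = (u y : EReal) + (t : EReal) * Lag H (t⁻¹ • (x - y))}

/-- `S⁺ u (x) = limsup_{t ↓ 0} (T^t u(x) - u(x))/t`. -/
def Splus (H : Euc n → ℝ) (U : Set (Euc n)) (u : Euc n → ℝ) (x : Euc n) : ℝ :=
  limsup (fun t => (TupOn H U u t x - u x) / t) (nhdsWithin 0 (Ioi 0))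

/-- The oscillation `osc_U u = sup_U u - inf_U u`. -/
def oscOn (u : Euc n → ℝ) (U : Set (Euc n)) : ℝ := sSup (u '' U) - sInf (u '' U)

/-- `U_r = {x ∈ U : dist(x, ∂U) > r}`. -/
def inUr (U : Set (Euc n)) (r : ℝ) : Set (Euc n) := {x ∈ U | r < infDist x (frontier U)}

/-- The cone function `C_k(x) = max {p·x : H(p) = k}`. -/
def coneFn (H : Euc n → ℝ) (k : ℝ) (x : Euc n) : ℝ :=
  sSup {r : ℝ | ∃ p, H p = k ∧ r = ⟪p, x⟫}

/-- The subdifferential of `H` at `p`. -/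
def subdiff (H : Euc n → ℝ) (p : Euc n) : Set (Euc n) :=
  {q | ∀ p', H p + ⟪q, p' - p⟫ ≤ H p'}

/-- `Γ_k`: subgradients of `H` at points of the level set `H⁻¹(k)`. -/
def GammaSet (H : Euc n → ℝ) (k : ℝ) : Set (Euc n) :=
  {q | ∃ p, H p = k ∧ q ∈ subdiff H p}

/-- `W_k`: subgradients of `H` at points of the sublevel set `H⁻¹([0,k])`. -/
def WSet (H : Euc n → ℝ) (k : ℝ) : Set (Euc n) :=
  {q | ∃ p, 0 ≤ H p ∧ H p ≤ k ∧ q ∈ subdiff H p}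

/-- `u ∈ Lip_loc(U)`: `u` is locally Lipschitz on `U`. -/
def LocLipOn (u : Euc n → ℝ) (U : Set (Euc n)) : Prop :=
  ∀ x ∈ U, ∃ K : NNReal, ∃ s ∈ nhdsWithin x U, LipschitzOnWith K u s

/-- `ess sup_V H(Dv)`, defined to be `+∞` if `v` is not locally Lipschitz in `V`.
Here `Dv` is the a.e.-defined gradient (Rademacher). -/
def essSupH (H : Euc n → ℝ) (V : Set (Euc n)) (v : Euc n → ℝ) : EReal :=
  haveI := Classical.propDecidable (LocLipOn v V)
  if LocLipOn v V then
    essSup (fun x => ((H (gradient v x) : ℝ) : EReal)) (volume.restrict V)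
  else ⊤

/-- `u` is absolutely subminimizing for `H` in `U`. -/
def AbsSubmin (H : Euc n → ℝ) (U : Set (Euc n)) (u : Euc n → ℝ) : Prop :=
  LocLipOn u U ∧
  ∀ V : Set (Euc n), IsOpen V → IsCompact (closure V) → closure V ⊆ U →
    ∀ v : Euc n → ℝ, LocLipOn v V → ContinuousOn v (closure V) →
      EqOn v u (frontier V) → (∀ x ∈ V, v x ≤ u x) →
        essSupH H V u ≤ essSupH H V v

/-- `u` is absolutely superminimizing for `H` in `U`. -/
def AbsSupermin (H : Euc n → ℝ) (U : Set (Euc n)) (u : Euc n → ℝ) : Prop :=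
  LocLipOn u U ∧
  ∀ V : Set (Euc n), IsOpen V → IsCompact (closure V) → closure V ⊆ U →
    ∀ v : Euc n → ℝ, LocLipOn v V → ContinuousOn v (closure V) →
      EqOn v u (frontier V) → (∀ x ∈ V, u x ≤ v x) →
        essSupH H V u ≤ essSupH H V v

/-- `u` satisfies comparisons with cones from above in `U`. -/
def CmpConesAbove (H : Euc n → ℝ) (U : Set (Euc n)) (u : Euc n → ℝ) : Prop :=
  ∀ k : ℝ, 0 ≤ k → ∀ V : Set (Euc n), IsOpen V → IsCompact (closure V) → closure V ⊆ U →
    ∀ x₀, x₀ ∉ V →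
      sSup ((fun x => u x - coneFn H k (x - x₀)) '' closure V) =
      sSup ((fun x => u x - coneFn H k (x - x₀)) '' frontier V)

/-- `u` satisfies the convexity criterion in `U`. -/
def ConvexityCriterion (H : Euc n → ℝ) (U : Set (Euc n)) (u : Euc n → ℝ) : Prop :=
  ∀ V : Set (Euc n), IsOpen V → IsCompact (closure V) → closure V ⊆ U →
    ∃ δ > (0:ℝ), ∀ x ∈ V, ConvexOn ℝ (Icc 0 δ) (fun t => TupOn H U u t x)

/-- `u` satisfies the pointwise convexity criterion in `U`. -/
def PtwiseCC (H : Euc n → ℝ) (U : Set (Euc n)) (u : Euc n → ℝ) : Prop :=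
  UpperSemicontinuousOn (Splus H U u) U ∧
  ∀ x ∈ U, ∃ δ > (0:ℝ), ConvexOn ℝ (Icc 0 δ) (fun t => TupOn H U u t x)

end

noncomputable section Helpers
variable {n : ℕ}
lemma lag_nonneg (H : Euc n → ℝ) (hH0 : H 0 = 0) (q : Euc n) : 0 ≤ Lag H q := by
  have h := le_iSup (fun p : Euc n => ((⟪p, q⟫ - H p : ℝ) : EReal)) 0
  simpa [hH0, Lag] using h

lemma lag_zero (H : Euc n → ℝ) (hH0 : H 0 = 0) (hHnn : ∀ p, 0 ≤ H p) : Lag H 0 = 0 := by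
  refine le_antisymm (iSup_le fun p => ?_) (lag_nonneg H hH0 0)
  have : (⟪p, (0:Euc n)⟫ - H p : ℝ) ≤ 0 := by simp [hHnn p]
  exact_mod_cast this

def TupSet (H : Euc n → ℝ) (S : Set (Euc n)) (u : Euc n → ℝ) (t : ℝ) (x : Euc n) : Set ℝ :=
  {r : ℝ | ∃ y ∈ S, (r : EReal) = (u y : EReal) - (t : EReal) * Lag H (t⁻¹ • (y - x))}

lemma tupOn_pos {H : Euc n → ℝ} {S : Set (Euc n)} {u : Euc n → ℝ} {t : ℝ} {x : Euc n}
    (ht : t ≠ 0) : TupOn H S u t x = sSup (TupSet H S u t x) := if_neg ht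

lemma tupOn_zero {H : Euc n → ℝ} {S : Set (Euc n)} {u : Euc n → ℝ} {x : Euc n} :
    TupOn H S u 0 x = u x := if_pos rfl

lemma tupSet_elim {H : Euc n → ℝ} {S : Set (Euc n)} {u : Euc n → ℝ} {t : ℝ} {x : Euc n}
    (hH0 : H 0 = 0) (ht : 0 < t) {r : ℝ} (hr : r ∈ TupSet H S u t x) :
    ∃ y ∈ S, ∃ l : ℝ, 0 ≤ l ∧ Lag H (t⁻¹ • (y - x)) = (l : EReal) ∧ r = u y - t * l := by
  obtain ⟨y, hy, hre⟩ := hr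
  have hL0 : 0 ≤ Lag H (t⁻¹ • (y - x)) := lag_nonneg H hH0 _
  rcases eq_or_ne (Lag H (t⁻¹ • (y - x))) ⊤ with hL | hL
  · rw [hL, EReal.coe_mul_top_of_pos (by exact_mod_cast ht)] at hre
    simp only [EReal.sub_top] at hre
    exact absurd hre (EReal.coe_ne_bot r)
  · have hbot : Lag H (t⁻¹ • (y - x)) ≠ ⊥ := by
      intro h; rw [h] at hL0; exact absurd hL0 (by simp)
    set l := (Lag H (t⁻¹ • (y - x))).toReal with hldef
    have hcoe : ((l : ℝ) : EReal) = Lag H (t⁻¹ • (y - x)) := EReal.coe_toReal hL hbot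
    refine ⟨y, hy, l, ?_, hcoe.symm, ?_⟩
    · rw [← hcoe] at hL0; exact_mod_cast hL0
    · rw [← hcoe] at hre
      have : (r : EReal) = ((u y - t * l : ℝ) : EReal) := by rw [hre]; norm_cast
      exact_mod_cast this

lemma tupSet_mem {H : Euc n → ℝ} {S : Set (Euc n)} {u : Euc n → ℝ} {t : ℝ} {x y : Euc n}
    {l : ℝ} (hy : y ∈ S) (hl : Lag H (t⁻¹ • (y - x)) = (l : EReal)) :
    u y - t * l ∈ TupSet H S u t x :=
  ⟨y, hy, by rw [hl]; norm_cast⟩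

lemma self_mem_tupSet {H : Euc n → ℝ} {S : Set (Euc n)} {u : Euc n → ℝ} {t : ℝ} {x : Euc n}
    (hH0 : H 0 = 0) (hHnn : ∀ p, 0 ≤ H p) (hx : x ∈ S) : u x ∈ TupSet H S u t x := by
  have h := tupSet_mem (H := H) (u := u) (t := t) (x := x) (l := 0) hx
    (by simp [sub_self, smul_zero, lag_zero H hH0 hHnn])
  simpa using h

lemma tupSet_bddAbove {H : Euc n → ℝ} {S : Set (Euc n)} {u : Euc n → ℝ} {t : ℝ} {x : Euc n}
    {M : ℝ} (hH0 : H 0 = 0) (ht : 0 < t) (hM : ∀ y ∈ S, u y ≤ M) :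
    ∀ r ∈ TupSet H S u t x, r ≤ M := by
  intro r hr
  obtain ⟨y, hy, l, hl0, -, rfl⟩ := tupSet_elim hH0 ht hr
  nlinarith [hM y hy, ht.le]

lemma le_tupOn {H : Euc n → ℝ} {S : Set (Euc n)} {u : Euc n → ℝ} {t : ℝ} {x : Euc n}
    {M : ℝ} (hH0 : H 0 = 0) (hHnn : ∀ p, 0 ≤ H p) (hM : ∀ y ∈ S, u y ≤ M)
    (ht : 0 ≤ t) (hx : x ∈ S) : u x ≤ TupOn H S u t x := by
  rcases eq_or_lt_of_le ht with rfl | ht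
  · rw [tupOn_zero]
  · rw [tupOn_pos ht.ne']
    exact le_csSup ⟨M, fun r hr => tupSet_bddAbove hH0 ht hM r hr⟩
      (self_mem_tupSet hH0 hHnn hx)

lemma tupOn_le {H : Euc n → ℝ} {S : Set (Euc n)} {u : Euc n → ℝ} {t : ℝ} {x : Euc n}
    {M : ℝ} (hH0 : H 0 = 0) (hHnn : ∀ p, 0 ≤ H p) (hM : ∀ y ∈ S, u y ≤ M)
    (ht : 0 ≤ t) (hx : x ∈ S) : TupOn H S u t x ≤ M := by
  rcases eq_or_lt_of_le ht with rfl | ht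
  · rw [tupOn_zero]; exact hM x hx
  · rw [tupOn_pos ht.ne']
    exact csSup_le ⟨u x, self_mem_tupSet hH0 hHnn hx⟩ (tupSet_bddAbove hH0 ht hM)

lemma H_cont {H : Euc n → ℝ} (hHconv : ConvexOn ℝ Set.univ H) : Continuous H := by
  rw [← continuousOn_univ]
  exact hHconv.continuousOn isOpen_univ

lemma exists_bound_ball {H : Euc n → ℝ} (hHconv : ConvexOn ℝ Set.univ H) (R : ℝ) :
    ∃ CR ≥ (0:ℝ), ∀ p : Euc n, ‖p‖ ≤ R → H p ≤ CR := by
  rcases lt_or_ge R 0 with hR | hR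
  · exact ⟨0, le_refl 0, fun p hp => absurd (le_trans (norm_nonneg p) hp) (not_le.2 hR)⟩
  · obtain ⟨p₀, -, hp₀⟩ := (isCompact_closedBall (0:Euc n) R).exists_isMaxOn
      ⟨0, by simpa using hR⟩ ((H_cont hHconv).continuousOn)
    refine ⟨max (H p₀) 0, le_max_right _ _, fun p hp => ?_⟩
    have : H p ≤ H p₀ := hp₀ (by simpa [mem_closedBall, dist_eq_norm] using hp)
    exact le_trans this (le_max_left _ _)

lemma exists_linear_lower (hn : 1 ≤ n) {H : Euc n → ℝ} (hHconv : ConvexOn ℝ Set.univ H)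
    (hH0 : H 0 = 0) (hHnn : ∀ p, 0 ≤ H p) (hHzb : IsBounded {p : Euc n | H p = 0}) :
    ∃ c > (0:ℝ), ∃ C ≥ (0:ℝ), ∀ p, c * ‖p‖ - C ≤ H p := by
  obtain ⟨R, hR⟩ := hHzb.subset_closedBall 0
  set R' : ℝ := max R 0 + 1 with hR'def
  have hR'pos : 0 < R' := by positivity
  haveI : Nonempty (Fin n) := ⟨⟨0, hn⟩⟩
  have hsph : (sphere (0:Euc n) R').Nonempty := by
    rw [NormedSpace.sphere_nonempty]; exact hR'pos.le
  obtain ⟨p₀, hp₀mem, hp₀min⟩ := (isCompact_sphere (0:Euc n) R').exists_isMinOn hsph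
    ((H_cont hHconv).continuousOn)
  have hp₀norm : ‖p₀‖ = R' := by simpa [mem_sphere_iff_norm] using hp₀mem
  have hm : 0 < H p₀ := by
    rcases (hHnn p₀).lt_or_eq with h | h
    · exact h
    · exfalso
      have : p₀ ∈ closedBall (0:Euc n) R := hR h.symm
      rw [mem_closedBall, dist_zero_right, hp₀norm] at this
      have : R' ≤ max R 0 := le_trans this (le_max_left _ _)
      linarith [hR'def ▸ this]
  refine ⟨H p₀ / R', by positivity, H p₀, hm.le, fun p => ?_⟩
  rcases le_or_gt ‖p‖ R' with hp | hp
  · have : H p₀ / R' * ‖p‖ ≤ H p₀ := by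
      rw [div_mul_eq_mul_div, div_le_iff₀ hR'pos]
      nlinarith [norm_nonneg p, hm]
    linarith [hHnn p]
  · set s : ℝ := R' / ‖p‖ with hsdef
    have hpn : 0 < ‖p‖ := lt_trans hR'pos hp
    have hs0 : 0 < s := by positivity
    have hs1 : s < 1 := by rw [hsdef, div_lt_one hpn]; exact hp
    have hkey := hHconv.2 (mem_univ p) (mem_univ (0:Euc n)) hs0.le (by linarith : (0:ℝ) ≤ 1 - s)
      (by ring)
    have hnorm : ‖s • p‖ = R' := by
      rw [norm_smul, Real.norm_eq_abs, abs_of_pos hs0, hsdef]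
      field_simp
    have hmin : H p₀ ≤ H (s • p) := hp₀min (by simpa [mem_sphere_iff_norm] using hnorm)
    rw [smul_zero, add_zero, hH0] at hkey
    -- hkey : H (s • p) ≤ s * H p + (1-s)*0
    have h1 : H p₀ ≤ s * H p := by
      calc H p₀ ≤ H (s • p) := hmin
        _ ≤ s * H p + (1 - s) * 0 := hkey
        _ = s * H p := by ring
    have h2 : H p₀ / R' * ‖p‖ ≤ H p := by
      rw [div_mul_eq_mul_div, div_le_iff₀ hR'pos]
      have : H p₀ * ‖p‖ ≤ s * H p * ‖p‖ := by nlinarith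
      calc H p₀ * ‖p‖ ≤ s * H p * ‖p‖ := this
        _ = H p * R' := by rw [hsdef]; field_simp
    linarith [hm]

lemma lag_le {H : Euc n → ℝ} {c C : ℝ} (hlower : ∀ p, c * ‖p‖ - C ≤ H p)
    {q : Euc n} (hq : ‖q‖ ≤ c) : Lag H q ≤ (C : EReal) := by
  refine iSup_le fun p => ?_
  have h1 : ⟪p, q⟫ ≤ ‖p‖ * ‖q‖ := real_inner_le_norm p q
  have : (⟪p, q⟫ - H p : ℝ) ≤ C := by nlinarith [hlower p, norm_nonneg p, norm_nonneg q]
  exact_mod_cast this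

lemma lag_lower {H : Euc n → ℝ} {R CR : ℝ} (hH0 : H 0 = 0)
    (hub : ∀ p : Euc n, ‖p‖ ≤ R → H p ≤ CR) (hR : 0 ≤ R) (hCR : 0 ≤ CR) (q : Euc n) :
    ((R * ‖q‖ - CR : ℝ) : EReal) ≤ Lag H q := by
  rcases eq_or_ne q 0 with rfl | hq
  · have h1 : ((R * ‖(0:Euc n)‖ - CR : ℝ) : EReal) ≤ ((0:ℝ) : EReal) := by
      have : (R * ‖(0:Euc n)‖ - CR : ℝ) ≤ 0 := by simp [hCR]
      exact_mod_cast this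
    have h2 : ((0:ℝ) : EReal) ≤ Lag H 0 := by
      simpa using lag_nonneg H hH0 0
    exact le_trans h1 h2
  · have hqn : 0 < ‖q‖ := norm_pos_iff.2 hq
    set p : Euc n := (R / ‖q‖) • q with hpdef
    have hip : ⟪p, q⟫ = R * ‖q‖ := by
      rw [hpdef, real_inner_smul_left, real_inner_self_eq_norm_sq]
      field_simp
    have hpn : ‖p‖ = R := by
      rw [hpdef, norm_smul, Real.norm_eq_abs, abs_of_nonneg (by positivity)]
      field_simp
    have h1 : (R * ‖q‖ - CR : ℝ) ≤ ⟪p, q⟫ - H p := by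
      rw [hip]; linarith [hub p hpn.le]
    calc ((R * ‖q‖ - CR : ℝ) : EReal) ≤ ((⟪p, q⟫ - H p : ℝ) : EReal) := by exact_mod_cast h1
      _ ≤ Lag H q := le_iSup (fun p : Euc n => ((⟪p, q⟫ - H p : ℝ) : EReal)) p

lemma slope_monotone {H : Euc n → ℝ} {U : Set (Euc n)} {u : Euc n → ℝ} {x : Euc n} {δ : ℝ}
    (hδ : 0 < δ) (hconv : ConvexOn ℝ (Icc 0 δ) (fun t => TupOn H U u t x)) :
    MonotoneOn (fun t => (TupOn H U u t x - u x) / t) (Ioc 0 δ) := by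
  intro s hs t ht hst
  have h := hconv.secant_mono (a := 0) (x := s) (y := t)
    ⟨le_refl 0, hδ.le⟩ ⟨hs.1.le, hs.2⟩ ⟨ht.1.le, ht.2⟩ hs.1.ne' ht.1.ne' hst
  simpa [tupOn_zero, sub_zero] using h

lemma splus_eq_sInf {H : Euc n → ℝ} {U : Set (Euc n)} {u : Euc n → ℝ} {x : Euc n} {δ M : ℝ}
    (hH0 : H 0 = 0) (hHnn : ∀ p, 0 ≤ H p) (hM : ∀ y ∈ U, u y ≤ M)
    (hx : x ∈ U) (hδ : 0 < δ)
    (hconv : ConvexOn ℝ (Icc 0 δ) (fun t => TupOn H U u t x)) :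
    Splus H U u x = sInf ((fun t => (TupOn H U u t x - u x) / t) '' Ioo 0 δ) := by
  set g := fun t => (TupOn H U u t x - u x) / t with hg
  have hmono := slope_monotone hδ hconv
  have hg0 : ∀ t ∈ Ioo (0:ℝ) δ, 0 ≤ g t := fun t htm =>
    div_nonneg (sub_nonneg.2 (le_tupOn hH0 hHnn hM htm.1.le hx)) htm.1.le
  have hne : (g '' Ioo 0 δ).Nonempty :=
    ⟨g (δ/2), ⟨δ/2, ⟨half_pos hδ, half_lt_self hδ⟩, rfl⟩⟩
  have hbdd : BddBelow (g '' Ioo 0 δ) := ⟨0, by rintro _ ⟨t, htm, rfl⟩; exact hg0 t htm⟩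
  have htend : Tendsto g (nhdsWithin (0:ℝ) (Ioi 0)) (nhds (sInf (g '' Ioo 0 δ))) := by
    rw [tendsto_order]
    constructor
    · intro a ha
      filter_upwards [Ioo_mem_nhdsGT hδ] with t htm
      exact lt_of_lt_of_le ha (csInf_le hbdd ⟨t, htm, rfl⟩)
    · intro a ha
      obtain ⟨-, ⟨t1, ht1, rfl⟩, hlt⟩ := exists_lt_of_csInf_lt hne ha
      filter_upwards [Ioo_mem_nhdsGT ht1.1] with t htm
      exact lt_of_le_of_lt
        (hmono ⟨htm.1, (htm.2.le.trans ht1.2.le)⟩ ⟨ht1.1, ht1.2.le⟩ htm.2.le) hlt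
  exact htend.limsup_eq

lemma tupOn_translate_le {H : Euc n → ℝ} {U : Set (Euc n)} {u : Euc n → ℝ}
    {t rl R CR M m ε : ℝ} {x x' : Euc n}
    (hH0 : H 0 = 0) (hHnn : ∀ p, 0 ≤ H p)
    (ht : 0 < t) (hx : x ∈ U) (hx' : x' ∈ U)
    (hM : ∀ y ∈ U, u y ≤ M) (hm : ∀ y ∈ U, m ≤ u y)
    (hball : closedBall x' rl ⊆ U)
    (hclose : ∀ y ∈ U, ‖y - x‖ ≤ rl → u y ≤ u (y + (x' - x)) + ε)
    (hrl : 0 ≤ rl) (hR : 0 ≤ R)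
    (hlag : ∀ q : Euc n, ((R * ‖q‖ - CR : ℝ) : EReal) ≤ Lag H q)
    (hcut : M - R * rl + t * CR ≤ m) :
    TupOn H U u t x ≤ TupOn H U u t x' + ε := by
  have hxx' : u x ≤ u x' + ε := by
    have := hclose x hx (by simpa using hrl)
    simpa using this
  have hTx' : u x' ≤ TupOn H U u t x' := le_tupOn hH0 hHnn hM ht.le hx'
  rw [tupOn_pos ht.ne']
  refine csSup_le ⟨u x, self_mem_tupSet hH0 hHnn hx⟩ ?_
  intro r hr
  obtain ⟨y, hy, l, hl0, hlag_eq, rfl⟩ := tupSet_elim hH0 ht hr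
  by_cases hnear : ‖y - x‖ ≤ rl
  · have hy' : y + (x' - x) ∈ U := by
      apply hball
      rw [mem_closedBall, dist_eq_norm]
      have : y + (x' - x) - x' = y - x := by abel
      rw [this]; exact hnear
    have harg : t⁻¹ • (y + (x' - x) - x') = t⁻¹ • (y - x) := by
      congr 1; abel
    have hmem : u (y + (x' - x)) - t * l ∈ TupSet H U u t x' :=
      tupSet_mem hy' (by rw [harg]; exact hlag_eq)
    have h1 : u (y + (x' - x)) - t * l ≤ TupOn H U u t x' := by
      rw [tupOn_pos ht.ne']
      exact le_csSup ⟨M, fun r hr => tupSet_bddAbove hH0 ht hM r hr⟩ hmem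
    linarith [hclose y hy hnear]
  · push_neg at hnear
    have hql : R * ‖t⁻¹ • (y - x)‖ - CR ≤ l := by
      have := hlag (t⁻¹ • (y - x))
      rw [hlag_eq] at this
      exact_mod_cast this
    have hqnorm : ‖t⁻¹ • (y - x)‖ = t⁻¹ * ‖y - x‖ := by
      rw [norm_smul, Real.norm_eq_abs, abs_of_pos (inv_pos.2 ht)]
    have htl : R * ‖y - x‖ - t * CR ≤ t * l := by
      rw [hqnorm] at hql
      have h2 := mul_le_mul_of_nonneg_left hql ht.le
      calc R * ‖y - x‖ - t * CR = t * (R * (t⁻¹ * ‖y - x‖) - CR) := by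
            field_simp
        _ ≤ t * l := h2
    have h3 : u y - t * l ≤ m := by
      have h4 : R * rl ≤ R * ‖y - x‖ := mul_le_mul_of_nonneg_left hnear.le hR
      linarith [hM y hy]
    linarith [hm x hx]

end Helpers

/-- Consequences of the convexity criterion: monotone difference quotients, the formula for
`S⁺u`, upper semicontinuity of `S⁺u`, and local Lipschitz continuity. -/
theorem convexity_criterion_consequences {n : ℕ} (hn : 1 ≤ n) (H : Euc n → ℝ)
    (hHconv : ConvexOn ℝ Set.univ H) (hH0 : H 0 = 0) (hHnonneg : ∀ p, 0 ≤ H p)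
    (hHzb : Bornology.IsBounded {p : Euc n | H p = 0})
    (hHzi : interior {p : Euc n | H p = 0} = ∅)
    (U : Set (Euc n)) (hU : IsOpen U) (u : Euc n → ℝ)
    (huc : ContinuousOn u U) (hub : Bornology.IsBounded (u '' U))
    (hcc : ConvexityCriterion H U u) :
    (∀ V : Set (Euc n), IsOpen V → IsCompact (closure V) → closure V ⊆ U →
      ∀ δ : ℝ, 0 < δ → (∀ x ∈ V, ConvexOn ℝ (Icc 0 δ) (fun t => TupOn H U u t x)) →
        (∀ x ∈ V, MonotoneOn (fun t => (TupOn H U u t x - u x) / t) (Ioc 0 δ)) ∧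
        (∀ x ∈ V, Splus H U u x =
          sInf ((fun t => (TupOn H U u t x - u x) / t) '' Ioo 0 δ))) ∧
    UpperSemicontinuousOn (Splus H U u) U ∧
    LocLipOn u U := by
  classical
  set M := sSup (u '' U) with hMdef
  set m := sInf (u '' U) with hmdef
  have hM : ∀ y ∈ U, u y ≤ M := fun y hy => le_csSup hub.bddAbove ⟨y, hy, rfl⟩
  have hm : ∀ y ∈ U, m ≤ u y := fun y hy => csInf_le hub.bddBelow ⟨y, hy, rfl⟩
  obtain ⟨c, hc, C, hC, hlin⟩ := exists_linear_lower hn hHconv hH0 hHnonneg hHzb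
  refine ⟨?_, ?_, ?_⟩
  · intro V hVopen hVcpt hVsub δ hδ hconv
    have hVU : V ⊆ U := subset_closure.trans hVsub
    exact ⟨fun x hx => slope_monotone hδ (hconv x hx),
           fun x hx => splus_eq_sInf hH0 hHnonneg hM (hVU hx) hδ (hconv x hx)⟩
  · -- upper semicontinuity of S⁺u
    intro x₀ hx₀ b hb
    obtain ⟨ρ, hρ, hρU⟩ : ∃ ρ > (0:ℝ), closedBall x₀ ρ ⊆ U := by
      obtain ⟨ρ, hρ', h⟩ := Metric.isOpen_iff.1 hU x₀ hx₀
      exact ⟨ρ/2, half_pos hρ', (closedBall_subset_ball (half_lt_self hρ')).trans h⟩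
    have hVc : closure (ball x₀ ρ) ⊆ U := closure_ball_subset_closedBall.trans hρU
    have hVcpt : IsCompact (closure (ball x₀ ρ)) :=
      (isCompact_closedBall x₀ ρ).of_isClosed_subset isClosed_closure
        closure_ball_subset_closedBall
    obtain ⟨δ, hδ, hconv⟩ := hcc (ball x₀ ρ) isOpen_ball hVcpt hVc
    obtain ⟨rl, hrl, hKU⟩ :=
      (isCompact_closedBall x₀ ρ).exists_cthickening_subset_open hU hρU
    set K := cthickening rl (closedBall x₀ ρ) with hKdef
    have hKcpt : IsCompact K :=
      Metric.isCompact_of_isClosed_isBounded isClosed_cthickening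
        ((isBounded_closedBall).cthickening)
    set R := (M - m + 1)/rl with hRdef
    have hMm : m ≤ M := le_trans (hm x₀ hx₀) (hM x₀ hx₀)
    have hR0 : 0 ≤ R := div_nonneg (by linarith) hrl.le
    obtain ⟨CR, hCR, hubR⟩ := exists_bound_ball hHconv R
    have hlag := lag_lower hH0 hubR hR0 hCR
    have hx₀V : x₀ ∈ ball x₀ ρ := mem_ball_self hρ
    have hform := splus_eq_sInf hH0 hHnonneg hM hx₀ hδ (hconv x₀ hx₀V)
    set ε := b - Splus H U u x₀ with hεdef
    have hεpos : 0 < ε := sub_pos.2 hb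
    have hne : ((fun t => (TupOn H U u t x₀ - u x₀) / t) '' Ioo 0 δ).Nonempty :=
      ⟨_, ⟨δ/2, ⟨half_pos hδ, half_lt_self hδ⟩, rfl⟩⟩
    have hlt : sInf ((fun t => (TupOn H U u t x₀ - u x₀) / t) '' Ioo 0 δ)
        < Splus H U u x₀ + ε/2 := by rw [← hform]; linarith
    obtain ⟨-, ⟨t1, ht1, rfl⟩, hglt⟩ := exists_lt_of_csInf_lt hne hlt
    set ts := min t1 ((CR + 1)⁻¹) with htsdef
    have hts0 : 0 < ts := lt_min ht1.1 (by positivity)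
    have htsδ : ts < δ := lt_of_le_of_lt (min_le_left _ _) ht1.2
    have hg_ts : (TupOn H U u ts x₀ - u x₀)/ts < Splus H U u x₀ + ε/2 :=
      lt_of_le_of_lt (slope_monotone hδ (hconv x₀ hx₀V) ⟨hts0, htsδ.le⟩
        ⟨ht1.1, ht1.2.le⟩ (min_le_left _ _)) hglt
    have hucK : UniformContinuousOn u K :=
      hKcpt.uniformContinuousOn_of_continuous (huc.mono hKU)
    set ε₁ := ts * ε / 8 with hε₁def
    have hε₁ : 0 < ε₁ := by positivity
    obtain ⟨η, hη, hcont⟩ := Metric.uniformContinuousOn_iff.1 hucK ε₁ hε₁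
    have hev1 : ∀ᶠ x' in nhdsWithin x₀ U, dist (u x') (u x₀) < ε₁ :=
      Metric.tendsto_nhds.1 (huc x₀ hx₀) ε₁ hε₁
    have hev2 : ball x₀ (min ρ η) ∈ nhdsWithin x₀ U :=
      mem_nhdsWithin_of_mem_nhds (ball_mem_nhds _ (lt_min hρ hη))
    filter_upwards [hev1, hev2, self_mem_nhdsWithin] with x' hu' hball' hx'U
    have hx'V : x' ∈ ball x₀ ρ :=
      mem_ball.2 (lt_of_lt_of_le (mem_ball.1 hball') (min_le_left _ _))
    have hform' := splus_eq_sInf hH0 hHnonneg hM hx'U hδ (hconv x' hx'V)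
    have hbdd' : BddBelow ((fun t => (TupOn H U u t x' - u x') / t) '' Ioo 0 δ) := by
      refine ⟨0, ?_⟩
      rintro - ⟨t, htm, rfl⟩
      exact div_nonneg (sub_nonneg.2 (le_tupOn hH0 hHnonneg hM htm.1.le hx'U)) htm.1.le
    have hle : Splus H U u x' ≤ (TupOn H U u ts x' - u x')/ts := by
      rw [hform']
      exact csInf_le hbdd' ⟨ts, ⟨hts0, htsδ⟩, rfl⟩
    have hT : TupOn H U u ts x' ≤ TupOn H U u ts x₀ + ε₁ := by
      refine tupOn_translate_le hH0 hHnonneg hts0 hx'U hx₀ hM hm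
        ((closedBall_subset_cthickening (mem_closedBall_self hρ.le) rl).trans hKU)
        ?_ hrl.le hR0 hlag ?_
      · intro y hyU hynear
        have hx'K : x' ∈ closedBall x₀ ρ := ball_subset_closedBall hx'V
        have hyK : y ∈ K := closedBall_subset_cthickening hx'K rl
          (by rw [mem_closedBall, dist_eq_norm]; exact hynear)
        have hy'K : y + (x₀ - x') ∈ K :=
          closedBall_subset_cthickening (mem_closedBall_self hρ.le) rl
            (by rw [mem_closedBall, dist_eq_norm]
                have : y + (x₀ - x') - x₀ = y - x' := by abel
                rw [this]; exact hynear)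
        have hdyy' : dist y (y + (x₀ - x')) = dist x' x₀ := by
          rw [dist_eq_norm, dist_eq_norm]
          have : y - (y + (x₀ - x')) = x' - x₀ := by abel
          rw [this]
        have hd := hcont y hyK (y + (x₀ - x')) hy'K
          (by rw [hdyy']; exact lt_of_lt_of_le (mem_ball.1 hball') (min_le_right _ _))
        rw [Real.dist_eq] at hd
        have := abs_lt.1 hd
        linarith [this.1, this.2]
      · have h1 : R * rl = M - m + 1 := by
          rw [hRdef]; field_simp
        have h2 : ts * CR ≤ 1 := by
          have h3 : ts ≤ (CR + 1)⁻¹ := min_le_right _ _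
          have h4 : ts * CR ≤ (CR + 1)⁻¹ * CR :=
            mul_le_mul_of_nonneg_right h3 hCR
          have h5 : (CR + 1)⁻¹ * CR ≤ 1 := by
            rw [inv_mul_le_iff₀ (by positivity)]; linarith
          linarith
        linarith
    have hu'2 : u x₀ - ε₁ ≤ u x' := by
      rw [Real.dist_eq] at hu'
      have := abs_lt.1 hu'
      linarith [this.1]
    have harith : (TupOn H U u ts x₀ - u x₀ + 2*ε₁)/ts
        = (TupOn H U u ts x₀ - u x₀)/ts + ε/4 := by
      rw [hε₁def]; field_simp; ring
    have hstep : (TupOn H U u ts x' - u x')/ts ≤ (TupOn H U u ts x₀ - u x₀ + 2*ε₁)/ts :=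
      (div_le_div_iff_of_pos_right hts0).mpr (by linarith)
    have : Splus H U u x' ≤ (TupOn H U u ts x₀ - u x₀)/ts + ε/4 := by
      rw [← harith]; exact le_trans hle hstep
    have hfin : Splus H U u x' < Splus H U u x₀ + ε/2 + ε/4 := by linarith
    have : Splus H U u x₀ + ε/2 + ε/4 < b := by rw [hεdef]; linarith
    linarith
  · -- local Lipschitz continuity
    intro x₀ hx₀
    obtain ⟨ρ, hρ, hρU⟩ : ∃ ρ > (0:ℝ), closedBall x₀ ρ ⊆ U := by
      obtain ⟨ρ, hρ', h⟩ := Metric.isOpen_iff.1 hU x₀ hx₀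
      exact ⟨ρ/2, half_pos hρ', (closedBall_subset_ball (half_lt_self hρ')).trans h⟩
    have hVc : closure (ball x₀ ρ) ⊆ U := closure_ball_subset_closedBall.trans hρU
    have hVcpt : IsCompact (closure (ball x₀ ρ)) :=
      (isCompact_closedBall x₀ ρ).of_isClosed_subset isClosed_closure
        closure_ball_subset_closedBall
    obtain ⟨δ, hδ, hconv⟩ := hcc (ball x₀ ρ) isOpen_ball hVcpt hVc
    have hMm : m ≤ M := le_trans (hm x₀ hx₀) (hM x₀ hx₀)
    set k := ((M - m)/δ + C)/c with hkdef
    have hk0 : 0 ≤ k := by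
      apply div_nonneg _ hc.le
      have : 0 ≤ (M - m)/δ := div_nonneg (by linarith) hδ.le
      linarith
    refine ⟨k.toNNReal, ball x₀ (min ρ (c*δ/2)),
      mem_nhdsWithin_of_mem_nhds (ball_mem_nhds _ (lt_min hρ (by positivity))), ?_⟩
    have key : ∀ x ∈ ball x₀ (min ρ (c*δ/2)), ∀ y ∈ ball x₀ (min ρ (c*δ/2)),
        u y - u x ≤ k * dist x y := by
      intro x hx y hy
      rcases eq_or_ne y x with rfl | hne
      · simp
      · set t := ‖y - x‖ / c with htdef
        have hyx : 0 < ‖y - x‖ := norm_pos_iff.2 (sub_ne_zero.2 hne)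
        have ht : 0 < t := by positivity
        have hdist : ‖y - x‖ < c * δ := by
          have h1 : dist y x₀ < c*δ/2 := lt_of_lt_of_le (mem_ball.1 hy) (min_le_right _ _)
          have h2 : dist x x₀ < c*δ/2 := lt_of_lt_of_le (mem_ball.1 hx) (min_le_right _ _)
          calc ‖y - x‖ = dist y x := (dist_eq_norm y x).symm
            _ ≤ dist y x₀ + dist x₀ x := dist_triangle y x₀ x
            _ = dist y x₀ + dist x x₀ := by rw [dist_comm x₀ x]
            _ < c*δ/2 + c*δ/2 := add_lt_add h1 h2
            _ = c * δ := by ring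
        have htδ : t < δ := by
          rw [htdef, div_lt_iff₀ hc]; linarith [hdist]
        have hxV : x ∈ ball x₀ ρ :=
          mem_ball.2 (lt_of_lt_of_le (mem_ball.1 hx) (min_le_left _ _))
        have hyV : y ∈ ball x₀ ρ :=
          mem_ball.2 (lt_of_lt_of_le (mem_ball.1 hy) (min_le_left _ _))
        have hxU : x ∈ U := hρU (ball_subset_closedBall hxV)
        have hyU : y ∈ U := hρU (ball_subset_closedBall hyV)
        have hqnorm : ‖t⁻¹ • (y - x)‖ = c := by
          rw [norm_smul, Real.norm_eq_abs, abs_of_pos (inv_pos.2 ht), htdef]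
          field_simp
        have hlagle : Lag H (t⁻¹ • (y - x)) ≤ (C:EReal) := lag_le hlin hqnorm.le
        have hlagnn : 0 ≤ Lag H (t⁻¹ • (y - x)) := lag_nonneg H hH0 _
        have hne_top : Lag H (t⁻¹ • (y - x)) ≠ ⊤ := by
          intro h; rw [h] at hlagle
          exact absurd hlagle (by simp)
        have hne_bot : Lag H (t⁻¹ • (y - x)) ≠ ⊥ := by
          intro h; rw [h] at hlagnn
          exact absurd hlagnn (by simp)
        set l := (Lag H (t⁻¹ • (y - x))).toReal with hldef
        have hcoe : ((l:ℝ) : EReal) = Lag H (t⁻¹ • (y - x)) := EReal.coe_toReal hne_top hne_bot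
        have hl0 : 0 ≤ l := by
          rw [← hcoe] at hlagnn; exact_mod_cast hlagnn
        have hlC : l ≤ C := by
          rw [← hcoe] at hlagle; exact_mod_cast hlagle
        have hmem : u y - t * l ∈ TupSet H U u t x := tupSet_mem hyU hcoe.symm
        have h1 : u y - t*l ≤ TupOn H U u t x := by
          rw [tupOn_pos ht.ne']
          exact le_csSup ⟨M, fun r hr => tupSet_bddAbove hH0 ht hM r hr⟩ hmem
        have h2 := slope_monotone hδ (hconv x hxV) ⟨ht, htδ.le⟩ ⟨hδ, le_refl δ⟩ htδ.le
        have h3 : TupOn H U u δ x ≤ M := tupOn_le hH0 hHnonneg hM hδ.le hxU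
        have h4 : (TupOn H U u t x - u x)/t ≤ (M - m)/δ :=
          le_trans h2 ((div_le_div_iff_of_pos_right hδ).mpr (by linarith [hm x hxU]))
        have h5 : TupOn H U u t x ≤ u x + t * ((M-m)/δ) := by
          rw [div_le_iff₀ ht] at h4
          linarith
        have h6 : u y ≤ u x + t * ((M-m)/δ) + t * l := by linarith
        have hdist_eq : dist x y = ‖y - x‖ := by rw [dist_eq_norm, norm_sub_rev]
        have h7 : t * ((M-m)/δ) + t * l ≤ t * ((M-m)/δ + C) := by
          have := mul_le_mul_of_nonneg_left hlC ht.le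
          rw [mul_add]
          linarith
        have h8 : t * ((M-m)/δ + C) = k * ‖y - x‖ := by
          rw [htdef, hkdef]; field_simp
        rw [hdist_eq]
        linarith
    refine LipschitzOnWith.of_dist_le_mul fun x hx y hy => ?_
    rw [Real.dist_eq, Real.coe_toNNReal k hk0, abs_sub_le_iff]
    constructor
    · have := key y hy x hx
      rw [dist_comm] at this
      linarith
    · exact key x hx y hy
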